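/- Let H be a real or complex Hilbert space, X ⊆ H a bounded set, and ξ ∈ H. If ξ lies in the norm closure of the convex hull of X, then for every η ∈ H there exists ζ ∈ X such that ‖ξ - ζ‖ ≤ ‖η - ζ‖. -/

import Mathlib

theorem stmt_0 {H : Type*} [NormedAddCommGroup H] [InnerProductSpace ℝ H] [CompleteSpace H]
    (X : Set H) (hX : Bornology.IsBounded X) (ξ : H)
    (h : ξ ∈ closure (convexHull ℝ X)) :
    ∀ η : H, ∃ ζ ∈ X, ‖ξ - ζ‖ ≤ ‖η - ζ‖ := by
  intro η
  by_contra hc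
  push_neg at hc
  set c : ℝ := (‖ξ‖ ^ 2 - ‖η‖ ^ 2) / 2 with hc_def
  set S : Set H := {z : H | (inner ℝ (ξ - η) z : ℝ) ≤ c} with hS
  have hXS : X ⊆ S := by
    intro ζ hζ
    have hlt := hc ζ hζ
    have h2 : ‖η - ζ‖ ^ 2 ≤ ‖ξ - ζ‖ ^ 2 := by
      have : (0:ℝ) ≤ ‖η - ζ‖ := norm_nonneg _
      nlinarith [hlt.le]
    have e1 : ‖η - ζ‖ ^ 2 = ‖η‖ ^ 2 - 2 * (inner ℝ η ζ : ℝ) + ‖ζ‖ ^ 2 := by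
      rw [@norm_sub_sq_real]
    have e2 : ‖ξ - ζ‖ ^ 2 = ‖ξ‖ ^ 2 - 2 * (inner ℝ ξ ζ : ℝ) + ‖ζ‖ ^ 2 := by
      rw [@norm_sub_sq_real]
    have : (inner ℝ (ξ - η) ζ : ℝ) = (inner ℝ ξ ζ : ℝ) - (inner ℝ η ζ : ℝ) := by
      rw [inner_sub_left]
    simp only [hS, Set.mem_setOf_eq, this, hc_def]
    nlinarith
  have hconv : Convex ℝ S := convex_halfSpace_le
    (by exact ⟨fun x y => inner_add_right _ _ _, fun r x => real_inner_smul_right _ _ _⟩) c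
  have hclosed : IsClosed S := isClosed_le ((innerSL ℝ (ξ - η)).continuous) continuous_const
  have hξS : ξ ∈ S := by
    have h1 : convexHull ℝ X ⊆ S := convexHull_min hXS hconv
    have := closure_mono h1 h
    rwa [hclosed.closure_eq] at this
  have hξη : ξ = η := by
    have h3 : (inner ℝ (ξ - η) ξ : ℝ) ≤ c := hξS
    have h4 : (inner ℝ (ξ - η) ξ : ℝ) = ‖ξ‖ ^ 2 - (inner ℝ η ξ : ℝ) := by
      rw [inner_sub_left, real_inner_self_eq_norm_sq]
    have h5 : ‖ξ - η‖ ^ 2 ≤ 0 := by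
      have e : ‖ξ - η‖ ^ 2 = ‖ξ‖ ^ 2 - 2 * (inner ℝ ξ η : ℝ) + ‖η‖ ^ 2 := by
        rw [@norm_sub_sq_real]
      have hsymm : (inner ℝ η ξ : ℝ) = (inner ℝ ξ η : ℝ) := real_inner_comm _ _
      rw [e]; rw [h4, hsymm, hc_def] at h3; linarith
    have : ‖ξ - η‖ = 0 := by nlinarith [norm_nonneg (ξ - η)]
    rwa [norm_sub_eq_zero_iff] at this
  have hXne : X.Nonempty := by
    rw [← convexHull_nonempty_iff (𝕜 := ℝ)]
    rcases (closure_nonempty_iff.mp ⟨ξ, h⟩) with hne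
    exact hne
  obtain ⟨ζ, hζX⟩ := hXne
  have := hc ζ hζX
  rw [hξη] at this
  exact lt_irrefl _ this
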